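/- Fix m > 0 and ω_0 > 0, let U = {(r, θ) ∈ ℝ² : r > 2m, 0 < θ < π}, and define R : U → ℝ by R(r, θ) = −ω_0 r^{3/2} sin θ / √(r − 2m). Then R is differentiable on U, its gradient vanishes at a point (r, θ) ∈ U if and only if (r, θ) = (3m, π/2), and at this point ∂²R/∂r² = −√3 ω_0 / m < 0, ∂²R/∂θ² = 3√3 m ω_0 > 0, and ∂²R/∂r∂θ = 0; in particular (3m, π/2) is a nondegenerate saddle (the Hessian determinant equals −9 ω_0² < 0). -/

import Mathlib

open Real

open ContinuousLinearMap

lemma aux1 (m ω0 r θ : ℝ) (hr0 : 0 < r) (h1 : 0 < r - 2*m) :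
    HasFDerivAt (fun q : ℝ×ℝ => -ω0 * q.1 ^ ((3:ℝ)/2) * Real.sin q.2 / Real.sqrt (q.1 - 2*m))
      ((-ω0 * Real.sin θ * (Real.sqrt r * (r - 3*m) / Real.sqrt (r - 2*m) ^ 3)) • (fst ℝ ℝ ℝ) +
       (-ω0 * Real.cos θ * r ^ ((3:ℝ)/2) / Real.sqrt (r - 2*m)) • (snd ℝ ℝ ℝ)) (r, θ) := by
  have hs : (0:ℝ) < Real.sqrt (r - 2*m) := Real.sqrt_pos.2 h1
  have hφ : HasFDerivAt (fun q : ℝ×ℝ => q.1 ^ ((3:ℝ)/2))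
      (((3:ℝ)/2 * r ^ ((3:ℝ)/2 - 1)) • (fst ℝ ℝ ℝ)) (r, θ) :=
    (Real.hasDerivAt_rpow_const (Or.inl hr0.ne')).comp_hasFDerivAt (f := Prod.fst) (r, θ) hasFDerivAt_fst
  have hsin : HasFDerivAt (fun q : ℝ×ℝ => Real.sin q.2) ((Real.cos θ) • (snd ℝ ℝ ℝ)) (r, θ) :=
    (Real.hasDerivAt_sin θ).comp_hasFDerivAt (f := Prod.snd) (r, θ) hasFDerivAt_snd
  have hχ : HasFDerivAt (fun q : ℝ×ℝ => Real.sqrt (q.1 - 2*m))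
      ((1/(2*Real.sqrt (r - 2*m))) • (fst ℝ ℝ ℝ)) (r, θ) :=
    (Real.hasDerivAt_sqrt h1.ne').comp_hasFDerivAt (r, θ)
      (hasFDerivAt_fst.sub_const (2*m) : HasFDerivAt (fun q : ℝ×ℝ => q.1 - 2*m) _ (r, θ))
  have hinv : HasFDerivAt (fun q : ℝ×ℝ => (Real.sqrt (q.1 - 2*m))⁻¹)
      ((-(Real.sqrt (r-2*m)^2)⁻¹) • ((1/(2*Real.sqrt (r - 2*m))) • (fst ℝ ℝ ℝ))) (r, θ) :=
    (hasDerivAt_inv hs.ne').comp_hasFDerivAt (r, θ) hχ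
  have hnum : HasFDerivAt (fun q : ℝ×ℝ => -ω0 * q.1 ^ ((3:ℝ)/2) * Real.sin q.2)
      ((-ω0 * r ^ ((3:ℝ)/2)) • ((Real.cos θ) • (snd ℝ ℝ ℝ)) +
        Real.sin θ • ((-ω0) • (((3:ℝ)/2 * r ^ ((3:ℝ)/2 - 1)) • (fst ℝ ℝ ℝ)))) (r, θ) :=
    (hφ.const_mul (-ω0)).mul hsin
  have h := hnum.mul hinv
  have heq : (fun q : ℝ×ℝ => -ω0 * q.1 ^ ((3:ℝ)/2) * Real.sin q.2 / Real.sqrt (q.1 - 2*m))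
      = fun q : ℝ×ℝ => (-ω0 * q.1 ^ ((3:ℝ)/2) * Real.sin q.2) * (Real.sqrt (q.1 - 2*m))⁻¹ := by
    funext q; rw [div_eq_mul_inv]
  rw [heq]
  refine h.congr_fderiv (Eq.symm ?_)
  have hs2 : Real.sqrt (r - 2*m) ^ 2 = r - 2*m := Real.sq_sqrt h1.le
  have h12 : r ^ ((3:ℝ)/2 - 1) = Real.sqrt r := by
    rw [show (3:ℝ)/2 - 1 = 1/2 by norm_num, ← Real.sqrt_eq_rpow]
  have h32 : r ^ ((3:ℝ)/2) = r * Real.sqrt r := by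
    rw [show (3:ℝ)/2 = 1 + 1/2 by norm_num, Real.rpow_add hr0, Real.rpow_one, ← Real.sqrt_eq_rpow]
  ext
  · simp only [ContinuousLinearMap.comp_apply, ContinuousLinearMap.add_apply,
      ContinuousLinearMap.smul_apply, ContinuousLinearMap.coe_fst', ContinuousLinearMap.coe_snd',
      ContinuousLinearMap.inl_apply, ContinuousLinearMap.inr_apply, smul_eq_mul, h12, h32]
    set S := Real.sqrt (r - 2*m) with hS
    field_simp
    linear_combination (3*ω0*Real.sin θ) * hs2
  · simp only [ContinuousLinearMap.comp_apply, ContinuousLinearMap.add_apply,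
      ContinuousLinearMap.smul_apply, ContinuousLinearMap.coe_fst', ContinuousLinearMap.coe_snd',
      ContinuousLinearMap.inl_apply, ContinuousLinearMap.inr_apply, smul_eq_mul, h12, h32]
    set S := Real.sqrt (r - 2*m) with hS
    field_simp
    ring

/-- On the Schwarzschild domain of outer communication the vacuum potential
`R(r,θ) = −ω₀ r^{3/2} sin θ/√(r − 2m)` is differentiable, its gradient vanishes
exactly at `(3m, π/2)`, and there the second derivatives are
`∂²R/∂r² = −√3 ω₀/m < 0`, `∂²R/∂θ² = 3√3 m ω₀ > 0`, `∂²R/∂r∂θ = 0`,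
so the Hessian determinant equals `−9ω₀² < 0` (a nondegenerate saddle). -/
theorem stmt15 (m ω0 : ℝ) (hm : 0 < m) (hω0 : 0 < ω0)
    (U : Set (ℝ × ℝ))
    (hU : U = {q : ℝ × ℝ | 2 * m < q.1 ∧ 0 < q.2 ∧ q.2 < π})
    (R : ℝ × ℝ → ℝ)
    (hR : ∀ q : ℝ × ℝ,
      R q = -ω0 * q.1 ^ ((3 : ℝ) / 2) * Real.sin q.2 / Real.sqrt (q.1 - 2 * m)) :
    DifferentiableOn ℝ R U ∧
    (∀ q ∈ U, fderiv ℝ R q = 0 ↔ q = (3 * m, π / 2)) ∧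
    deriv (fun u => deriv (fun v => R (v, π / 2)) u) (3 * m) = -Real.sqrt 3 * ω0 / m ∧
    -Real.sqrt 3 * ω0 / m < 0 ∧
    deriv (fun u => deriv (fun v => R (3 * m, v)) u) (π / 2) = 3 * Real.sqrt 3 * m * ω0 ∧
    0 < 3 * Real.sqrt 3 * m * ω0 ∧
    deriv (fun u => deriv (fun v => R (u, v)) (π / 2)) (3 * m) = 0 ∧
    deriv (fun u => deriv (fun v => R (v, π / 2)) u) (3 * m) *
        deriv (fun u => deriv (fun v => R (3 * m, v)) u) (π / 2) -
      (deriv (fun u => deriv (fun v => R (u, v)) (π / 2)) (3 * m)) ^ 2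
      = -9 * ω0 ^ 2 ∧
    -9 * ω0 ^ 2 < 0 := by
  have hRf : R = fun q : ℝ×ℝ => -ω0 * q.1 ^ ((3:ℝ)/2) * Real.sin q.2 / Real.sqrt (q.1 - 2*m) :=
    funext hR
  subst hRf
  subst hU
  have h3m : (0:ℝ) < 3*m := by linarith
  have hm32 : (0:ℝ) < 3*m - 2*m := by linarith
  have hsm : (0:ℝ) < Real.sqrt m := Real.sqrt_pos.2 hm
  have hsm2 : Real.sqrt m ^ 2 = m := Real.sq_sqrt hm.le
  have hs3 : Real.sqrt 3 ^ 2 = 3 := Real.sq_sqrt (by norm_num)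
  have hem : (3:ℝ)*m - 2*m = m := by ring
  have h3m32 : (3*m : ℝ) ^ ((3:ℝ)/2) = (3*m) * (Real.sqrt 3 * Real.sqrt m) := by
    rw [show (3:ℝ)/2 = 1 + 1/2 by norm_num, Real.rpow_add h3m, Real.rpow_one,
      ← Real.sqrt_eq_rpow, Real.sqrt_mul (by norm_num : (0:ℝ) ≤ 3)]
  -- ∂²/∂r² computation
  have hrr : deriv (fun u => deriv
      (fun v => (fun q : ℝ×ℝ => -ω0 * q.1 ^ ((3:ℝ)/2) * Real.sin q.2 / Real.sqrt (q.1 - 2*m)) (v, π / 2)) u)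
      (3 * m) = -Real.sqrt 3 * ω0 / m := by
    have hslice : ∀ u : ℝ, 2*m < u → deriv
        (fun v => (fun q : ℝ×ℝ => -ω0 * q.1 ^ ((3:ℝ)/2) * Real.sin q.2 / Real.sqrt (q.1 - 2*m)) (v, π / 2)) u
        = -ω0 * (Real.sqrt u * (u - 3*m) / Real.sqrt (u - 2*m)^3) := by
      intro u hu
      have hu0 : 0 < u := by linarith
      have hu1 : 0 < u - 2*m := by linarith
      have hcurve : HasDerivAt (fun v : ℝ => (v, π/2)) ((1 : ℝ), (0 : ℝ)) u :=
        (hasDerivAt_id u).prodMk (hasDerivAt_const u (π/2))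
      have hD' := (aux1 m ω0 u (π/2) hu0 hu1).comp_hasDerivAt u hcurve
      have hD : HasDerivAt
          (fun v => (fun q : ℝ×ℝ => -ω0 * q.1 ^ ((3:ℝ)/2) * Real.sin q.2 / Real.sqrt (q.1 - 2*m)) (v, π / 2))
          (((-ω0 * Real.sin (π/2) * (Real.sqrt u * (u - 3*m) / Real.sqrt (u - 2*m) ^ 3)) • (fst ℝ ℝ ℝ) +
            (-ω0 * Real.cos (π/2) * u ^ ((3:ℝ)/2) / Real.sqrt (u - 2*m)) • (snd ℝ ℝ ℝ)) (1, 0)) u := hD'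
      rw [hD.deriv]
      simp [Real.sin_pi_div_two]
    have hev : (fun u => deriv
        (fun v => (fun q : ℝ×ℝ => -ω0 * q.1 ^ ((3:ℝ)/2) * Real.sin q.2 / Real.sqrt (q.1 - 2*m)) (v, π / 2)) u)
        =ᶠ[nhds (3*m)] fun u => -ω0 * (Real.sqrt u * (u - 3*m) / Real.sqrt (u - 2*m)^3) := by
      filter_upwards [Ioi_mem_nhds (show 2*m < 3*m by linarith)] with u hu using hslice u hu
    rw [hev.deriv_eq]
    have ha : HasDerivAt (fun u : ℝ => Real.sqrt u) (1/(2*Real.sqrt (3*m))) (3*m) :=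
      Real.hasDerivAt_sqrt h3m.ne'
    have hb : HasDerivAt (fun u : ℝ => u - 3*m) 1 (3*m) := (hasDerivAt_id _).sub_const _
    have hc0 : HasDerivAt (fun u : ℝ => Real.sqrt (u - 2*m)) (1/(2*Real.sqrt (3*m-2*m))) (3*m) := by
      have := (Real.hasDerivAt_sqrt hm32.ne').comp (3*m)
        ((hasDerivAt_id (3*m)).sub_const (2*m))
      simpa [Function.comp_def] using this
    have hcne : Real.sqrt (3*m-2*m)^3 ≠ 0 := by positivity
    have hcinv := (hc0.pow 3).inv hcne
    have hprod := ((ha.mul hb).mul hcinv).const_mul (-ω0)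
    have hGeq : (fun u => -ω0 * (Real.sqrt u * (u - 3*m) / Real.sqrt (u - 2*m)^3))
        = fun u => -ω0 * (Real.sqrt u * (u - 3*m) * (Real.sqrt (u - 2*m)^3)⁻¹) := by
      funext u; rw [div_eq_mul_inv]
    rw [hGeq, (show HasDerivAt (fun u => -ω0 * (Real.sqrt u * (u - 3*m) * (Real.sqrt (u - 2*m)^3)⁻¹)) _ (3*m) from hprod).deriv]
    simp only [Pi.mul_apply, Pi.pow_apply, Pi.inv_apply]
    rw [hem, Real.sqrt_mul (by norm_num : (0:ℝ) ≤ 3)]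
    field_simp
    linear_combination (2*Real.sqrt 3^2*Real.sqrt m^4) * hsm2
  -- ∂²/∂θ² computation
  have hCθ : (fun v => (fun q : ℝ×ℝ => -ω0 * q.1 ^ ((3:ℝ)/2) * Real.sin q.2 / Real.sqrt (q.1 - 2*m)) ((3:ℝ)*m, v))
      = fun v => (-ω0 * ((3:ℝ)*m) ^ ((3:ℝ)/2) / Real.sqrt ((3:ℝ)*m - 2*m)) * Real.sin v := by
    funext v; simp only; ring
  have hθθ : deriv (fun u => deriv
      (fun v => (fun q : ℝ×ℝ => -ω0 * q.1 ^ ((3:ℝ)/2) * Real.sin q.2 / Real.sqrt (q.1 - 2*m)) (3*m, v)) u)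
      (π / 2) = 3 * Real.sqrt 3 * m * ω0 := by
    have hd1 : (fun u => deriv
        (fun v => (fun q : ℝ×ℝ => -ω0 * q.1 ^ ((3:ℝ)/2) * Real.sin q.2 / Real.sqrt (q.1 - 2*m)) (3*m, v)) u)
        = fun u => (-ω0 * ((3:ℝ)*m) ^ ((3:ℝ)/2) / Real.sqrt ((3:ℝ)*m - 2*m)) * Real.cos u := by
      funext u
      rw [hCθ]
      exact ((Real.hasDerivAt_sin u).const_mul _).deriv
    rw [hd1, ((Real.hasDerivAt_cos (π/2)).const_mul
      (-ω0 * ((3:ℝ)*m) ^ ((3:ℝ)/2) / Real.sqrt ((3:ℝ)*m - 2*m))).deriv,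
      Real.sin_pi_div_two, hem, h3m32]
    field_simp
  -- mixed partial
  have hmix : deriv (fun u => deriv
      (fun v => (fun q : ℝ×ℝ => -ω0 * q.1 ^ ((3:ℝ)/2) * Real.sin q.2 / Real.sqrt (q.1 - 2*m)) (u, v)) (π / 2))
      (3 * m) = 0 := by
    have hz : (fun u => deriv
        (fun v => (fun q : ℝ×ℝ => -ω0 * q.1 ^ ((3:ℝ)/2) * Real.sin q.2 / Real.sqrt (q.1 - 2*m)) (u, v)) (π / 2))
        = fun _ => (0:ℝ) := by
      funext u
      have hCu : (fun v => (fun q : ℝ×ℝ => -ω0 * q.1 ^ ((3:ℝ)/2) * Real.sin q.2 / Real.sqrt (q.1 - 2*m)) (u, v))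
          = fun v => (-ω0 * u ^ ((3:ℝ)/2) / Real.sqrt (u - 2*m)) * Real.sin v := by
        funext v; simp only; ring
      rw [hCu, ((Real.hasDerivAt_sin (π/2)).const_mul
        (-ω0 * u ^ ((3:ℝ)/2) / Real.sqrt (u - 2*m))).deriv, Real.cos_pi_div_two, mul_zero]
    rw [hz, deriv_const]
  refine ⟨?_, ?_, hrr, ?_, hθθ, ?_, hmix, ?_, ?_⟩
  · rintro ⟨r, θ⟩ hq
    have hr : 2*m < r := hq.1
    exact (aux1 m ω0 r θ (by linarith) (by linarith)).differentiableAt.differentiableWithinAt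
  · rintro ⟨r, θ⟩ ⟨hr, hθ0, hθπ⟩
    have hr0 : 0 < r := by linarith
    have h1 : 0 < r - 2*m := by linarith
    have hs : 0 < Real.sqrt (r-2*m) := Real.sqrt_pos.2 h1
    have hsr : 0 < Real.sqrt r := Real.sqrt_pos.2 hr0
    have hsin : 0 < Real.sin θ := Real.sin_pos_of_pos_of_lt_pi hθ0 hθπ
    rw [(aux1 m ω0 r θ hr0 h1).fderiv]
    constructor
    · intro h0
      have e1 := congrArg (fun T : ℝ×ℝ →L[ℝ] ℝ => T (1,0)) h0
      have e2 := congrArg (fun T : ℝ×ℝ →L[ℝ] ℝ => T (0,1)) h0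
      simp only [ContinuousLinearMap.add_apply, ContinuousLinearMap.smul_apply,
        ContinuousLinearMap.coe_fst', ContinuousLinearMap.coe_snd', smul_eq_mul,
        ContinuousLinearMap.zero_apply, mul_one, mul_zero, add_zero, zero_add] at e1 e2
      have hne1 : -ω0 * Real.sin θ ≠ 0 := mul_ne_zero (neg_ne_zero.2 hω0.ne') hsin.ne'
      have hX : Real.sqrt r * (r - 3*m) / Real.sqrt (r-2*m)^3 = 0 :=
        (mul_eq_zero.mp e1).resolve_left hne1
      have hnum : Real.sqrt r * (r - 3*m) = 0 :=
        (div_eq_zero_iff.mp hX).resolve_right (by positivity)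
      have hr3 : r = 3*m := sub_eq_zero.mp ((mul_eq_zero.mp hnum).resolve_left hsr.ne')
      have hnum2 : -ω0 * Real.cos θ * r ^ ((3:ℝ)/2) = 0 :=
        (div_eq_zero_iff.mp e2).resolve_right hs.ne'
      have hcos0 : -ω0 * Real.cos θ = 0 :=
        (mul_eq_zero.mp hnum2).resolve_right (Real.rpow_pos_of_pos hr0 _).ne'
      have hcos : Real.cos θ = 0 := by
        rcases mul_eq_zero.mp hcos0 with h | h
        · exact absurd h (neg_ne_zero.2 hω0.ne')
        · exact h
      have hθeq : θ = π/2 := by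
        have hπ := Real.pi_pos
        refine Real.injOn_cos ⟨hθ0.le, hθπ.le⟩ ⟨by linarith, by linarith⟩ ?_
        rw [hcos, Real.cos_pi_div_two]
      rw [hr3, hθeq]
    · intro h
      rw [Prod.mk.injEq] at h
      obtain ⟨rfl, rfl⟩ := h
      simp [Real.cos_pi_div_two]
  · have h3 : (0:ℝ) < Real.sqrt 3 := Real.sqrt_pos.2 (by norm_num)
    exact div_neg_of_neg_of_pos (by nlinarith) hm
  · have : (0:ℝ) < Real.sqrt 3 := Real.sqrt_pos.2 (by norm_num)
    positivity
  · rw [hrr, hθθ, hmix]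
    field_simp
    rw [hs3]; ring
  · nlinarith
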